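/- Under the hypotheses of the Sewing Lemma, let 0 ≤ γ < α and suppose there are a real Banach space (E, ‖·‖_E), a continuous linear injection ι : E → W with ‖ι(e)‖ ≤ ‖e‖_E, a constant C₀, and for each t ∈ (0,T] a linear map S_E(t) : W → E with ι(S_E(t)x) = S(t)x and ‖S_E(t)x‖_E ≤ C₀ t^{−γ}‖x‖ for all x ∈ W, and additionally a constant C₁ with ‖S(h)(ι(e)) − ι(e)‖ ≤ C₁ h^γ ‖e‖_E for all h ∈ [0,T] and e ∈ E. Then there is a constant C depending only on c_S, C₀, C₁, α, β, ρ, γ and T such that |IΞ(t) − IΞ(s)| ≤ C (c₁ + c₂)(t−s)^γ T^{α−γ} for all 0 ≤ s ≤ t ≤ T. -/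
import Mathlib

private lemma pow_rpow_comm' (x : ℝ) (hx : 0 ≤ x) (e : ℝ) (n : ℕ) :
    (x ^ n) ^ e = (x ^ e) ^ n := by
  rw [← Real.rpow_natCast x n, ← Real.rpow_mul hx, mul_comm, Real.rpow_mul hx, Real.rpow_natCast]

/-- Hölder estimate for `δIΞ` via the fractional domain. -/
theorem sewing_map_delta_estimate
    {W E : Type*} [NormedAddCommGroup W] [NormedSpace ℝ W] [CompleteSpace W]
    [NormedAddCommGroup E] [NormedSpace ℝ E] [CompleteSpace E]
    (T : ℝ) (hT : 0 < T)
    (S : ℝ → W →L[ℝ] W)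
    (hS0 : S 0 = ContinuousLinearMap.id ℝ W)
    (hSadd : ∀ t s : ℝ, 0 ≤ t → 0 ≤ s → S (t + s) = (S t).comp (S s))
    (cS : ℝ) (hScS : ∀ t : ℝ, 0 ≤ t → t ≤ T → ‖S t‖ ≤ cS)
    (Ξ : ℝ → ℝ → W)
    (hΞcont : ContinuousOn (fun p : ℝ × ℝ => Ξ p.1 p.2)
      {p : ℝ × ℝ | 0 ≤ p.2 ∧ p.2 ≤ p.1 ∧ p.1 ≤ T})
    (c₁ c₂ α β ρ : ℝ) (hc₁ : 0 ≤ c₁) (hc₂ : 0 ≤ c₂)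
    (hα0 : 0 ≤ α) (hα1 : α ≤ 1) (hβ0 : 0 ≤ β) (hβ1 : β ≤ 1) (hρ : 1 < ρ)
    (hαβρ : α + β ≤ ρ)
    (hΞ1 : ∀ u v : ℝ, 0 ≤ u → u ≤ v → v ≤ T → ‖Ξ v u‖ ≤ c₁ * (v - u) ^ α)
    (hΞ2 : ∀ u m v : ℝ, 0 < u → u ≤ m → m ≤ v → v ≤ T →
      ‖Ξ v u - Ξ v m - S (v - m) (Ξ m u)‖ ≤ c₂ * u ^ (-β) * (v - u) ^ ρ)
    -- `I` is the sewing map of `Ξ` provided by the Sewing Lemma: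
    (I : ℝ → W) (hIcont : ContinuousOn I (Set.Icc 0 T)) (hI0 : I 0 = 0)
    (CI : ℝ)
    (hIbd1 : ∀ s t : ℝ, 0 ≤ s → s ≤ t → t ≤ T →
      ‖I t - S (t - s) (I s)‖ ≤ CI * (c₁ + c₂) * (t - s) ^ α)
    (hIbd2 : ∀ s t : ℝ, 0 < s → s ≤ t → t ≤ T →
      ‖I t - S (t - s) (I s) - Ξ t s‖ ≤ CI * c₂ * s ^ (-β) * (t - s) ^ ρ)
    -- the fractional domain `D_γ` structure:
    (γ : ℝ) (hγ0 : 0 ≤ γ) (hγα : γ < α)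
    (ι : E →L[ℝ] W) (hιinj : Function.Injective ι) (hιnorm : ∀ e : E, ‖ι e‖ ≤ ‖e‖)
    (C₀ : ℝ) (hC₀ : 0 ≤ C₀)
    (SE : ℝ → W →ₗ[ℝ] E)
    (hSE : ∀ t : ℝ, 0 < t → t ≤ T → ∀ x : W, ι (SE t x) = S t x)
    (hSEbd : ∀ t : ℝ, 0 < t → t ≤ T → ∀ x : W, ‖SE t x‖ ≤ C₀ * t ^ (-γ) * ‖x‖)
    (C₁ : ℝ) (hC₁ : 0 ≤ C₁)
    (hSId : ∀ h : ℝ, 0 ≤ h → h ≤ T → ∀ e : E, ‖S h (ι e) - ι e‖ ≤ C₁ * h ^ γ * ‖e‖) :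
    ∃ C : ℝ, 0 ≤ C ∧ ∀ s t : ℝ, 0 ≤ s → s ≤ t → t ≤ T →
      ‖I t - I s‖ ≤ C * (c₁ + c₂) * (t - s) ^ γ * T ^ (α - γ) := by
  have hαγ : 0 < α - γ := by linarith
  have hαpos : 0 < α := lt_of_le_of_lt hγ0 hγα
  set θ : ℝ := (1/2 : ℝ) ^ (α - γ) with hθdef
  have hθpos : 0 < θ := Real.rpow_pos_of_pos (by norm_num) _
  have hθlt : θ < 1 := Real.rpow_lt_one (by norm_num) (by norm_num) hαγ
  have h1θ : 0 < 1 - θ := by linarith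
  set K : ℝ := max CI 0 with hKdef
  have hK0 : 0 ≤ K := le_max_right _ _
  have hc12 : 0 ≤ c₁ + c₂ := by linarith
  -- improved sewing bound with nonnegative constant
  have hIbd1' : ∀ s t : ℝ, 0 ≤ s → s ≤ t → t ≤ T →
      ‖I t - S (t - s) (I s)‖ ≤ K * (c₁ + c₂) * (t - s) ^ α := by
    intro s t hs hst htT
    refine (hIbd1 s t hs hst htT).trans ?_
    have : CI * (c₁ + c₂) ≤ K * (c₁ + c₂) :=
      mul_le_mul_of_nonneg_right (le_max_left _ _) hc12
    exact mul_le_mul_of_nonneg_right this (Real.rpow_nonneg (by linarith) _)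
  refine ⟨K * (1 + C₁ * C₀ * (1 - θ)⁻¹), by positivity, ?_⟩
  -- key estimate: smoothing of `I s`
  have key : ∀ h : ℝ, 0 ≤ h → h ≤ T → ∀ s : ℝ, 0 < s → s ≤ T →
      ‖S h (I s) - I s‖ ≤ C₁ * C₀ * K * (c₁ + c₂) * h ^ γ * (s ^ (α - γ) * (1 - θ)⁻¹) := by
    intro h hh0 hhT s hs hsT
    set A : ℕ → W := fun k => S (s / 2 ^ k) (I (s - s / 2 ^ k)) with hA
    have hδpos : ∀ k : ℕ, 0 < s / 2 ^ k := fun k => by positivity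
    have hδle : ∀ k : ℕ, s / 2 ^ k ≤ s := fun k =>
      div_le_self hs.le (one_le_pow₀ (by norm_num))
    have hδT : ∀ k : ℕ, s / 2 ^ k ≤ T := fun k => (hδle k).trans hsT
    have hm0 : ∀ k : ℕ, 0 ≤ s - s / 2 ^ k := fun k => by linarith [hδle k]
    have hmT : ∀ k : ℕ, s - s / 2 ^ k ≤ T := fun k => by linarith [hδpos k]
    have hhalf : ∀ k : ℕ, s / 2 ^ (k+1) + s / 2 ^ (k+1) = s / 2 ^ k := fun k => by
      rw [pow_succ]; ring
    -- the increments `A (k+1) - A k` lie in `ι '' E`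
    set x : ℕ → W := fun k =>
      I (s - s / 2 ^ (k+1)) - S (s / 2 ^ (k+1)) (I (s - s / 2 ^ k)) with hx
    have hAdiff : ∀ k : ℕ, A (k+1) - A k = S (s / 2 ^ (k+1)) (x k) := by
      intro k
      have h1 : S (s / 2 ^ k) = (S (s / 2 ^ (k+1))).comp (S (s / 2 ^ (k+1))) := by
        rw [← hhalf k]; exact hSadd _ _ (hδpos (k+1)).le (hδpos (k+1)).le
      simp only [hA, hx, map_sub, h1, ContinuousLinearMap.comp_apply]
    have hxbd : ∀ k : ℕ, ‖x k‖ ≤ K * (c₁ + c₂) * (s / 2 ^ (k+1)) ^ α := by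
      intro k
      have h2 : (s - s / 2 ^ (k+1)) - (s - s / 2 ^ k) = s / 2 ^ (k+1) := by
        rw [← hhalf k]; ring
      have := hIbd1' (s - s / 2 ^ k) (s - s / 2 ^ (k+1)) (hm0 k)
        (by linarith [hhalf k, hδpos (k+1)]) (hmT (k+1))
      rwa [h2] at this
    -- bound each smoothed increment
    have hstep : ∀ k : ℕ, ‖S h (A (k+1) - A k) - (A (k+1) - A k)‖ ≤
        C₁ * C₀ * K * (c₁ + c₂) * h ^ γ * s ^ (α - γ) * θ ^ k := by
      intro k
      set δ : ℝ := s / 2 ^ (k+1) with hδ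
      have hδp : 0 < δ := hδpos (k+1)
      set e : E := SE δ (x k) with he
      have hιe : ι e = A (k+1) - A k := by
        rw [he, hSE δ hδp (hδT (k+1)), ← hAdiff k]
      have hebd : ‖e‖ ≤ C₀ * K * (c₁ + c₂) * δ ^ (α - γ) := by
        have h1 : ‖e‖ ≤ C₀ * δ ^ (-γ) * ‖x k‖ := hSEbd δ hδp (hδT (k+1)) (x k)
        have h2 : C₀ * δ ^ (-γ) * ‖x k‖ ≤ C₀ * δ ^ (-γ) * (K * (c₁ + c₂) * δ ^ α) :=
          mul_le_mul_of_nonneg_left (hxbd k)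
            (by positivity)
        have h3 : C₀ * δ ^ (-γ) * (K * (c₁ + c₂) * δ ^ α)
            = C₀ * K * (c₁ + c₂) * δ ^ (α - γ) := by
          rw [show α - γ = -γ + α by ring, Real.rpow_add hδp]; ring
        linarith
      have h4 : ‖S h (A (k+1) - A k) - (A (k+1) - A k)‖ ≤ C₁ * h ^ γ * ‖e‖ := by
        rw [← hιe]; exact hSId h hh0 hhT e
      have h5 : C₁ * h ^ γ * ‖e‖ ≤ C₁ * h ^ γ * (C₀ * K * (c₁ + c₂) * δ ^ (α - γ)) :=
        mul_le_mul_of_nonneg_left hebd (by positivity)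
      have hδeq : δ ^ (α - γ) = s ^ (α - γ) * θ ^ (k+1) := by
        have : δ = s * (1/2 : ℝ) ^ (k+1) := by
          rw [hδ, one_div, inv_pow]; ring
        rw [this, Real.mul_rpow hs.le (by positivity),
          pow_rpow_comm' _ (by norm_num) _ _, hθdef]
      have hθpow : θ ^ (k+1) ≤ θ ^ k := by
        calc θ ^ (k+1) = θ * θ ^ k := by ring
        _ ≤ 1 * θ ^ k := mul_le_mul_of_nonneg_right hθlt.le (pow_nonneg hθpos.le k)
        _ = θ ^ k := one_mul _
      calc ‖S h (A (k+1) - A k) - (A (k+1) - A k)‖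
          ≤ C₁ * h ^ γ * (C₀ * K * (c₁ + c₂) * δ ^ (α - γ)) := le_trans h4 h5
        _ = C₁ * C₀ * K * (c₁ + c₂) * h ^ γ * s ^ (α - γ) * θ ^ (k+1) := by
            rw [hδeq]; ring
        _ ≤ C₁ * C₀ * K * (c₁ + c₂) * h ^ γ * s ^ (α - γ) * θ ^ k :=
            mul_le_mul_of_nonneg_left hθpow (by positivity)
    -- partial sums
    have hA0 : A 0 = 0 := by
      simp only [hA, pow_zero, div_one, sub_self, hI0, map_zero]
    have hFN : ∀ N : ℕ, ‖S h (A N) - A N‖ ≤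
        C₁ * C₀ * K * (c₁ + c₂) * h ^ γ * (s ^ (α - γ) * (1 - θ)⁻¹) := by
      intro N
      have htel : S h (A N) - A N =
          ∑ k ∈ Finset.range N, (S h (A (k+1) - A k) - (A (k+1) - A k)) := by
        have := Finset.sum_range_sub (fun k => S h (A k) - A k) N
        rw [hA0] at this
        simp only [map_zero, sub_zero] at this
        rw [← this]
        apply Finset.sum_congr rfl
        intro k _
        rw [map_sub]; abel
      rw [htel]
      calc ‖∑ k ∈ Finset.range N, (S h (A (k+1) - A k) - (A (k+1) - A k))‖
          ≤ ∑ k ∈ Finset.range N, ‖S h (A (k+1) - A k) - (A (k+1) - A k)‖ :=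
            norm_sum_le _ _
        _ ≤ ∑ k ∈ Finset.range N, C₁ * C₀ * K * (c₁ + c₂) * h ^ γ * s ^ (α - γ) * θ ^ k :=
            Finset.sum_le_sum fun k _ => hstep k
        _ = C₁ * C₀ * K * (c₁ + c₂) * h ^ γ * s ^ (α - γ) *
              ∑ k ∈ Finset.range N, θ ^ k := by rw [Finset.mul_sum]
        _ ≤ C₁ * C₀ * K * (c₁ + c₂) * h ^ γ * s ^ (α - γ) * (1 - θ)⁻¹ := by
            refine mul_le_mul_of_nonneg_left ?_ (by positivity)
            exact sum_le_hasSum (Finset.range N) (fun i _ => pow_nonneg hθpos.le i)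
              (hasSum_geometric_of_lt_one hθpos.le hθlt)
        _ = C₁ * C₀ * K * (c₁ + c₂) * h ^ γ * (s ^ (α - γ) * (1 - θ)⁻¹) := by ring
    -- pass to the limit `A N → I s`
    have hAconv : Filter.Tendsto A Filter.atTop (nhds (I s)) := by
      have hdiff : ∀ N : ℕ, ‖A N - I s‖ ≤ K * (c₁ + c₂) * (s / 2 ^ N) ^ α := by
        intro N
        have h2 : s - (s - s / 2 ^ N) = s / 2 ^ N := by ring
        have := hIbd1' (s - s / 2 ^ N) s (hm0 N) (by linarith [hδpos N]) hsT
        rw [h2] at this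
        rwa [← norm_neg, neg_sub] at this
      have hδconv : Filter.Tendsto (fun N : ℕ => s / 2 ^ N) Filter.atTop (nhds 0) := by
        have h1 : Filter.Tendsto (fun N : ℕ => ((1:ℝ)/2) ^ N) Filter.atTop (nhds 0) :=
          tendsto_pow_atTop_nhds_zero_of_lt_one (by norm_num) (by norm_num)
        have := h1.const_mul s
        rw [mul_zero] at this
        convert this using 2 with N
        rw [one_div, inv_pow]; ring
      have hrconv : Filter.Tendsto (fun N : ℕ => (s / 2 ^ N) ^ α) Filter.atTop (nhds 0) := by
        have hc : ContinuousAt (fun y : ℝ => y ^ α) 0 :=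
          Real.continuousAt_rpow_const 0 α (Or.inr hα0)
        have := hc.tendsto.comp hδconv
        rwa [Real.zero_rpow hαpos.ne'] at this
      have := hrconv.const_mul (K * (c₁ + c₂))
      rw [mul_zero] at this
      have hzero : Filter.Tendsto (fun N => A N - I s) Filter.atTop (nhds 0) :=
        squeeze_zero_norm hdiff this
      have := hzero.add_const (I s)
      simpa using this
    have hG : Filter.Tendsto (fun N => ‖S h (A N) - A N‖) Filter.atTop
        (nhds ‖S h (I s) - I s‖) :=
      ((((S h).continuous.tendsto (I s)).comp hAconv).sub hAconv).norm
    exact le_of_tendsto' hG hFN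
  -- conclusion
  intro s t hs hst htT
  rcases eq_or_lt_of_le hst with rfl | hstlt
  · simp only [sub_self, norm_zero]
    have h1 : (0:ℝ) ≤ (0:ℝ) ^ γ := Real.rpow_nonneg le_rfl γ
    have h2 : (0:ℝ) ≤ T ^ (α - γ) := Real.rpow_nonneg hT.le _
    have h3 : (0:ℝ) ≤ K * (1 + C₁ * C₀ * (1 - θ)⁻¹) := by positivity
    exact mul_nonneg (mul_nonneg (mul_nonneg h3 hc12) h1) h2
  have hts : 0 < t - s := by linarith
  have htsT : t - s ≤ T := by linarith
  have hterm1 : ‖I t - S (t - s) (I s)‖ ≤ K * (c₁ + c₂) * (t - s) ^ γ * T ^ (α - γ) := by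
    refine (hIbd1' s t hs hst htT).trans ?_
    have h1 : (t - s) ^ α = (t - s) ^ γ * (t - s) ^ (α - γ) := by
      rw [← Real.rpow_add hts]; ring_nf
    have h2 : (t - s) ^ (α - γ) ≤ T ^ (α - γ) :=
      Real.rpow_le_rpow hts.le htsT hαγ.le
    calc K * (c₁ + c₂) * (t - s) ^ α
        = K * (c₁ + c₂) * ((t - s) ^ γ * (t - s) ^ (α - γ)) := by rw [h1]
      _ ≤ K * (c₁ + c₂) * ((t - s) ^ γ * T ^ (α - γ)) := by
          refine mul_le_mul_of_nonneg_left ?_ (by positivity)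
          exact mul_le_mul_of_nonneg_left h2 (Real.rpow_nonneg hts.le _)
      _ = K * (c₁ + c₂) * (t - s) ^ γ * T ^ (α - γ) := by ring
  have hterm2 : ‖S (t - s) (I s) - I s‖ ≤
      C₁ * C₀ * K * (c₁ + c₂) * (t - s) ^ γ * (T ^ (α - γ) * (1 - θ)⁻¹) := by
    rcases eq_or_lt_of_le hs with rfl | hspos
    · simp only [hI0, map_zero, sub_zero, norm_zero]
      positivity
    · refine (key (t - s) hts.le htsT s hspos (le_trans hst htT)).trans ?_
      have h2 : s ^ (α - γ) ≤ T ^ (α - γ) :=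
        Real.rpow_le_rpow hs (le_trans hst htT) hαγ.le
      refine mul_le_mul_of_nonneg_left ?_ (by positivity)
      exact mul_le_mul_of_nonneg_right h2 (by positivity)
  calc ‖I t - I s‖ ≤ ‖I t - S (t - s) (I s)‖ + ‖S (t - s) (I s) - I s‖ := by
        have : I t - I s = (I t - S (t - s) (I s)) + (S (t - s) (I s) - I s) := by abel
        rw [this]; exact norm_add_le _ _
    _ ≤ K * (c₁ + c₂) * (t - s) ^ γ * T ^ (α - γ) +
        C₁ * C₀ * K * (c₁ + c₂) * (t - s) ^ γ * (T ^ (α - γ) * (1 - θ)⁻¹) :=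
        add_le_add hterm1 hterm2
    _ = K * (1 + C₁ * C₀ * (1 - θ)⁻¹) * (c₁ + c₂) * (t - s) ^ γ * T ^ (α - γ) := by ring
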